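/- For every integer n ≥ 2: α_n ≤ α_{n+1}, β_{n+1} ≤ β_n, α_n < (√3 − 1)/3, and β_n ≤ (√13 − 1)/4. -/
import Mathlib


/-- `α_n = (√(3n²+1) − (n+1)) / (3(n−1))`. -/
noncomputable def alph (n : ℕ) : ℝ :=
  (Real.sqrt (3 * (n : ℝ) ^ 2 + 1) - ((n : ℝ) + 1)) / (3 * ((n : ℝ) - 1))

/-- `β_n = (√(3n²+1) − (n−1)) / (2n)`. -/
noncomputable def beta (n : ℕ) : ℝ :=
  (Real.sqrt (3 * (n : ℝ) ^ 2 + 1) - ((n : ℝ) - 1)) / (2 * (n : ℝ))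

lemma le_of_sq_le_aux {x y : ℝ} (hx : 0 ≤ x) (hy : 0 ≤ y) (h : x ^ 2 ≤ y ^ 2) : x ≤ y := by
  nlinarith [sq_nonneg (x - y), sq_nonneg (x + y)]

lemma lt_of_sq_lt_aux {x y : ℝ} (hx : 0 ≤ x) (hy : 0 ≤ y) (h : x ^ 2 < y ^ 2) : x < y := by
  nlinarith [sq_nonneg (x - y), sq_nonneg (x + y)]

set_option maxHeartbeats 1000000 in
theorem stmt_11 (n : ℕ) (hn : 2 ≤ n) :
    alph n ≤ alph (n + 1) ∧ beta (n + 1) ≤ beta n ∧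
    alph n < (Real.sqrt 3 - 1) / 3 ∧ beta n ≤ (Real.sqrt 13 - 1) / 4 := by
  have hN : (2:ℝ) ≤ (n:ℝ) := by exact_mod_cast hn
  unfold alph beta
  push_cast
  set N : ℝ := (n : ℝ) with hNdef
  have h1 : (0:ℝ) ≤ 3 * N ^ 2 + 1 := by nlinarith
  have h2 : (0:ℝ) ≤ 3 * (N + 1) ^ 2 + 1 := by nlinarith
  set a := Real.sqrt (3 * N ^ 2 + 1) with hadef
  set b := Real.sqrt (3 * (N + 1) ^ 2 + 1) with hbdef
  have ha2 : a ^ 2 = 3 * N ^ 2 + 1 := Real.sq_sqrt h1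
  have hb2 : b ^ 2 = 3 * (N + 1) ^ 2 + 1 := Real.sq_sqrt h2
  have ha0 : 0 ≤ a := Real.sqrt_nonneg _
  have hb0 : 0 ≤ b := Real.sqrt_nonneg _
  have hs3 : Real.sqrt 3 ^ 2 = 3 := Real.sq_sqrt (by norm_num)
  have hs3' : (0:ℝ) ≤ Real.sqrt 3 := Real.sqrt_nonneg _
  have hs13 : Real.sqrt 13 ^ 2 = 13 := Real.sq_sqrt (by norm_num)
  have hs13' : (0:ℝ) ≤ Real.sqrt 13 := Real.sqrt_nonneg _
  have hkey : 3 * N + 4 ≤ 2 * b := by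
    nlinarith [sq_nonneg (2 * b - (3 * N + 4)), sq_nonneg (2 * b + (3 * N + 4))]
  refine ⟨?_, ?_, ?_, ?_⟩
  · rw [div_le_div_iff₀ (by linarith) (by linarith)]
    have hX2 : (N * a) ^ 2 ≤ ((N - 1) * b + 2) ^ 2 := by
      nlinarith [mul_nonneg (by linarith : (0:ℝ) ≤ N - 1) (by linarith : (0:ℝ) ≤ 2 * b - (3 * N + 4))]
    have hle : N * a ≤ (N - 1) * b + 2 :=
      le_of_sq_le_aux (mul_nonneg (by linarith) ha0) (by nlinarith) hX2
    nlinarith [hle]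
  · rw [div_le_div_iff₀ (by linarith) (by linarith)]
    have hX2 : (N * b) ^ 2 ≤ ((N + 1) * a + 1) ^ 2 := by
      nlinarith [mul_nonneg (by linarith : (0:ℝ) ≤ N + 1) ha0]
    have hle : N * b ≤ (N + 1) * a + 1 :=
      le_of_sq_le_aux (mul_nonneg (by linarith) hb0) (by nlinarith) hX2
    nlinarith [hle]
  · rw [div_lt_div_iff₀ (by linarith) (by norm_num)]
    have hs3lb : (3/2:ℝ) < Real.sqrt 3 := by
      nlinarith [hs3, hs3', sq_nonneg (Real.sqrt 3 + 3/2)]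
    have hX2 : a ^ 2 < (Real.sqrt 3 * (N - 1) + 2) ^ 2 := by
      nlinarith [mul_pos (by linarith : (0:ℝ) < N - 1) (by linarith : (0:ℝ) < 4 * Real.sqrt 3 - 6)]
    have hlt : a < Real.sqrt 3 * (N - 1) + 2 :=
      lt_of_sq_lt_aux ha0 (by nlinarith) hX2
    nlinarith [hlt]
  · rw [div_le_div_iff₀ (by linarith) (by norm_num)]
    have hs13lb : (3:ℝ) ≤ Real.sqrt 13 := by nlinarith
    have h13N : (0:ℝ) ≤ Real.sqrt 13 * N := mul_nonneg hs13' (by linarith)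
    have hX2 : (2 * a) ^ 2 ≤ (Real.sqrt 13 * N + N - 2) ^ 2 := by
      nlinarith [mul_nonneg (by linarith : (0:ℝ) ≤ N - 2) h13N]
    have hle : 2 * a ≤ Real.sqrt 13 * N + N - 2 :=
      le_of_sq_le_aux (by linarith) (by linarith) hX2
    nlinarith [hle]
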